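/- Let n ≥ 3 and m ≥ 1, and let m = F_{n,c_1} + F_{n,c_2} + ⋯ + F_{n,c_k} be the n-decomposition of m. Then for each 1 ≤ i ≤ n-1, N_{a_i}(m) = F_{n,c_1-(n+i-1)} + F_{n,c_2-(n+i-1)} + ⋯ + F_{n,c_k-(n+i-1)}, and N_{a_n}(m) = F_{n,c_1-(n-1)} + F_{n,c_2-(n-1)} + ⋯ + F_{n,c_k-(n-1)}. -/

import Mathlib

lemma Fvals' (n : ℕ) (hn : 3 ≤ n) (F : ℤ → ℤ)
    (hF1 : ∀ i : ℤ, 1 ≤ i → i ≤ (n : ℤ) → F i = 1)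
    (hFrec : ∀ m : ℤ, F (m + 1) = F m + F (m + 1 - n)) :
    ∀ i : ℤ, 3 - 2*(n:ℤ) ≤ i → i ≤ (n:ℤ) →
      F i = if i = 1 - (n:ℤ) then 1 else if 1 ≤ i then 1 else 0 := by
  have hz1 : ∀ i : ℤ, 2 - (n:ℤ) ≤ i → i ≤ 0 → F i = 0 := by
    intro i h1 h2
    have e1 := hFrec (i + (n:ℤ) - 1)
    rw [show i + (n:ℤ) - 1 + 1 - n = i by ring, show i + (n:ℤ) - 1 + 1 = i + n by ring] at e1
    have a1 : F (i + (n:ℤ)) = 1 := hF1 _ (by omega) (by omega)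
    have a2 : F (i + (n:ℤ) - 1) = 1 := hF1 _ (by omega) (by omega)
    omega
  have h1n : F (1 - (n:ℤ)) = 1 := by
    have e1 := hFrec 0
    rw [show (0:ℤ) + 1 - n = 1 - n by ring, show (0:ℤ) + 1 = 1 by ring] at e1
    have a1 : F 1 = 1 := hF1 _ (by omega) (by omega)
    have a2 : F 0 = 0 := hz1 0 (by omega) (by omega)
    omega
  have hz2 : ∀ i : ℤ, 3 - 2*(n:ℤ) ≤ i → i ≤ -(n:ℤ) → F i = 0 := by
    intro i h1 h2
    have e1 := hFrec (i + (n:ℤ) - 1)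
    rw [show i + (n:ℤ) - 1 + 1 - n = i by ring, show i + (n:ℤ) - 1 + 1 = i + n by ring] at e1
    have a1 : F (i + (n:ℤ)) = 0 := hz1 _ (by omega) (by omega)
    have a2 : F (i + (n:ℤ) - 1) = 0 := hz1 _ (by omega) (by omega)
    omega
  intro i hl hu
  split_ifs with h1 h2
  · rw [h1]; exact h1n
  · exact hF1 i h2 hu
  · rcases le_or_gt i (-(n:ℤ)) with h | h
    · exact hz2 i hl h
    · exact hz1 i (by omega) (by omega)

lemma Fnonneg' (n : ℕ) (hn : 3 ≤ n) (F : ℤ → ℤ)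
    (hF1 : ∀ i : ℤ, 1 ≤ i → i ≤ (n : ℤ) → F i = 1)
    (hFrec : ∀ m : ℤ, F (m + 1) = F m + F (m + 1 - n)) :
    ∀ i : ℤ, 3 - 2*(n:ℤ) ≤ i → 0 ≤ F i := by
  suffices h : ∀ k : ℕ, 0 ≤ F (3 - 2*(n:ℤ) + k) by
    intro i hi
    have := h (i - (3 - 2*(n:ℤ))).toNat
    rw [Int.toNat_of_nonneg (by omega)] at this
    rw [show 3 - 2*(n:ℤ) + (i - (3 - 2*(n:ℤ))) = i by ring] at this
    exact this
  intro k
  induction k using Nat.strong_induction_on with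
  | _ k ih =>
    rcases le_or_gt (3 - 2*(n:ℤ) + k) n with h | h
    · rw [Fvals' n hn F hF1 hFrec _ (by omega) h]
      split_ifs <;> norm_num
    · have hk1 : (k:ℤ) ≥ 3*n - 2 := by omega
      have e1 := hFrec (3 - 2*(n:ℤ) + k - 1)
      rw [show 3 - 2*(n:ℤ) + k - 1 + 1 = 3 - 2*(n:ℤ) + k by ring] at e1
      have c1 : 3 - 2*(n:ℤ) + k - 1 = 3 - 2*(n:ℤ) + ((k - 1 : ℕ) : ℤ) := by
        push_cast; omega
      have c2 : 3 - 2*(n:ℤ) + k - n = 3 - 2*(n:ℤ) + ((k - n : ℕ) : ℤ) := by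
        push_cast; omega
      rw [c1, c2] at e1
      have ih1 := ih (k - 1) (by omega)
      have ih2 := ih (k - n) (by omega)
      omega

lemma Fmono' (n : ℕ) (hn : 3 ≤ n) (F : ℤ → ℤ)
    (hF1 : ∀ i : ℤ, 1 ≤ i → i ≤ (n : ℤ) → F i = 1)
    (hFrec : ∀ m : ℤ, F (m + 1) = F m + F (m + 1 - n)) :
    ∀ a b : ℤ, 2 - (n:ℤ) ≤ a → a ≤ b → F a ≤ F b := by
  suffices h : ∀ k : ℕ, ∀ a : ℤ, 2 - (n:ℤ) ≤ a → F a ≤ F (a + k) by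
    intro a b ha hab
    have := h (b - a).toNat a ha
    rw [Int.toNat_of_nonneg (by omega), show a + (b - a) = b by ring] at this
    exact this
  intro k
  induction k with
  | zero => intro a _; simp
  | succ k ih =>
    intro a ha
    have e1 := hFrec (a + k)
    have h2 : 0 ≤ F (a + k + 1 - n) :=
      Fnonneg' n hn F hF1 hFrec _ (by omega)
    have := ih a ha
    push_cast
    rw [show a + ((k:ℤ) + 1) = a + k + 1 by ring]
    omega

lemma Fpos' (n : ℕ) (hn : 3 ≤ n) (F : ℤ → ℤ)
    (hF1 : ∀ i : ℤ, 1 ≤ i → i ≤ (n : ℤ) → F i = 1)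
    (hFrec : ∀ m : ℤ, F (m + 1) = F m + F (m + 1 - n)) :
    ∀ i : ℤ, 1 ≤ i → 1 ≤ F i := by
  intro i hi
  have := Fmono' n hn F hF1 hFrec 1 i (by omega) hi
  rw [hF1 1 (by omega) (by omega)] at this
  omega

lemma Slen' (n : ℕ) (hn : 3 ≤ n) (F : ℤ → ℤ)
    (hF1 : ∀ i : ℤ, 1 ≤ i → i ≤ (n : ℤ) → F i = 1)
    (hFrec : ∀ m : ℤ, F (m + 1) = F m + F (m + 1 - n))
    (S : ℕ → List ℕ)
    (hS1 : ∀ i, 1 ≤ i → i ≤ n → S i = [i])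
    (hSrec : ∀ m, n ≤ m → S (m + 1) = S m ++ S (m + 1 - n)) :
    ∀ j : ℕ, 1 ≤ j → ((S j).length : ℤ) = F j := by
  intro j
  induction j using Nat.strong_induction_on with
  | _ j ih =>
    intro hj
    rcases le_or_gt j n with h | h
    · rw [hS1 j hj h, hF1 j (by exact_mod_cast hj) (by exact_mod_cast h)]
      simp
    · have h1 : S j = S (j-1) ++ S (j-n) := by
        have := hSrec (j-1) (by omega)
        rw [show j - 1 + 1 - n = j - n by omega, show j - 1 + 1 = j by omega] at this
        exact this
      have e1 := hFrec ((j:ℤ) - 1)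
      rw [show (j:ℤ) - 1 + 1 - n = (j:ℤ) - n by ring, show (j:ℤ) - 1 + 1 = j by ring] at e1
      have c1 : ((j - 1 : ℕ) : ℤ) = (j:ℤ) - 1 := by omega
      have c2 : ((j - n : ℕ) : ℤ) = (j:ℤ) - n := by omega
      have ih1 := ih (j-1) (by omega) (by omega)
      have ih2 := ih (j-n) (by omega) (by omega)
      rw [h1, List.length_append]
      rw [c1] at ih1; rw [c2] at ih2
      push_cast
      omega

lemma Scount' (n : ℕ) (hn : 3 ≤ n) (F : ℤ → ℤ)
    (hF1 : ∀ i : ℤ, 1 ≤ i → i ≤ (n : ℤ) → F i = 1)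
    (hFrec : ∀ m : ℤ, F (m + 1) = F m + F (m + 1 - n))
    (S : ℕ → List ℕ)
    (hS1 : ∀ i, 1 ≤ i → i ≤ n → S i = [i])
    (hSrec : ∀ m, n ≤ m → S (m + 1) = S m ++ S (m + 1 - n)) :
    ∀ j : ℕ, 1 ≤ j → ∀ i : ℕ, 1 ≤ i → i ≤ n →
      (((S j).count i : ℤ)) = F ((j:ℤ) - (if i = n then (n:ℤ) - 1 else (n:ℤ) + i - 1)) := by
  intro j
  induction j using Nat.strong_induction_on with
  | _ j ih =>
    intro hj i hi1 hi2
    rcases le_or_gt j n with h | h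
    · rw [hS1 j hj h]
      by_cases hin : i = n
      · rw [if_pos hin]
        rw [Fvals' n hn F hF1 hFrec _ (by omega) (by omega)]
        by_cases hji : j = n
        · subst hji hin
          rw [if_neg (by omega), if_pos (by omega)]
          simp
        · rw [if_neg (by omega), if_neg (by omega)]
          subst hin
          simp [List.count_singleton]
          omega
      · rw [if_neg hin]
        rw [Fvals' n hn F hF1 hFrec _ (by omega) (by omega)]
        by_cases hji : j = i
        · subst hji
          rw [if_pos (by omega)]
          simp
        · rw [if_neg (by omega), if_neg (by omega)]
          simp [List.count_singleton]
          omega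
    · have h1 : S j = S (j-1) ++ S (j-n) := by
        have := hSrec (j-1) (by omega)
        rw [show j - 1 + 1 - n = j - n by omega, show j - 1 + 1 = j by omega] at this
        exact this
      set σ : ℤ := (if i = n then (n:ℤ) - 1 else (n:ℤ) + i - 1) with hσ
      have e1 := hFrec ((j:ℤ) - 1 - σ)
      rw [show (j:ℤ) - 1 - σ + 1 - n = (j:ℤ) - σ - n by ring,
        show (j:ℤ) - 1 - σ + 1 = j - σ by ring] at e1
      have c1 : ((j - 1 : ℕ) : ℤ) - σ = (j:ℤ) - 1 - σ := by omega
      have c2 : ((j - n : ℕ) : ℤ) - σ = (j:ℤ) - σ - n := by omega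
      have ih1 := ih (j-1) (by omega) (by omega) i hi1 hi2
      have ih2 := ih (j-n) (by omega) (by omega) i hi1 hi2
      rw [← hσ, c1] at ih1
      rw [← hσ, c2] at ih2
      rw [h1, List.count_append]
      push_cast
      omega

lemma sum_lt' (n : ℕ) (hn : 3 ≤ n) (F : ℤ → ℤ)
    (hF1 : ∀ i : ℤ, 1 ≤ i → i ≤ (n : ℤ) → F i = 1)
    (hFrec : ∀ m : ℤ, F (m + 1) = F m + F (m + 1 - n)) :
    ∀ L : List ℕ, (∀ c ∈ L, n ≤ c) → L.Pairwise (fun a b => a + n ≤ b) →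
    ∀ b : ℤ, 0 ≤ b → (∀ c ∈ L, (c:ℤ) ≤ b) →
    (L.map (fun c : ℕ => F (c:ℤ))).sum < F (b + 1) := by
  intro L
  induction L using List.reverseRecOn with
  | nil =>
    intro _ _ b hb _
    simpa using (show 0 < F (b+1) by have := Fpos' n hn F hF1 hFrec (b+1) (by omega); omega)
  | append_singleton L' c ih =>
    intro hmem hp b hb hle
    have hcn : n ≤ c := hmem c (by simp)
    have hcb : (c:ℤ) ≤ b := hle c (by simp)
    have hx : ∀ x ∈ L', (x:ℤ) ≤ (c:ℤ) - n := by
      intro x hxL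
      have := (List.pairwise_append.mp hp).2.2 x hxL c (by simp)
      omega
    have ihs := ih (fun x hxL => hmem x (by simp [hxL]))
      (hp.sublist (List.sublist_append_left L' [c]))
      ((c:ℤ) - n) (by omega) hx
    have e1 := hFrec (c:ℤ)
    have e2 : F ((c:ℤ) + 1) ≤ F (b + 1) :=
      Fmono' n hn F hF1 hFrec _ _ (by omega) (by omega)
    rw [List.map_append, List.sum_append]
    simp only [List.map_singleton, List.sum_singleton]
    rw [show (c:ℤ) - n + 1 = (c:ℤ) + 1 - n by ring] at ihs
    omega

lemma getW' (n : ℕ) (S : ℕ → List ℕ) (W : ℕ → ℕ)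
    (hW : ∀ m, n ≤ m → S m = (List.range (S m).length).map W)
    (j s : ℕ) (hj : n ≤ j) (hs : s < (S j).length) :
    (S j)[s]? = some (W s) := by
  conv_lhs => rw [hW j hj]
  rw [List.getElem?_map, List.getElem?_range hs]
  rfl

lemma main_count' (n : ℕ) (hn : 3 ≤ n) (F : ℤ → ℤ)
    (hF1 : ∀ i : ℤ, 1 ≤ i → i ≤ (n : ℤ) → F i = 1)
    (hFrec : ∀ m : ℤ, F (m + 1) = F m + F (m + 1 - n))
    (S : ℕ → List ℕ)
    (hS1 : ∀ i, 1 ≤ i → i ≤ n → S i = [i])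
    (hSrec : ∀ m, n ≤ m → S (m + 1) = S m ++ S (m + 1 - n))
    (W : ℕ → ℕ)
    (hW : ∀ m, n ≤ m → S m = (List.range (S m).length).map W) :
    ∀ L : List ℕ, (∀ c ∈ L, n ≤ c) → L.Pairwise (fun a b => a + n ≤ b) →
    ∀ m : ℕ, (m:ℤ) = (L.map (fun c : ℕ => F (c:ℤ))).sum →
    ∀ i : ℕ, 1 ≤ i → i ≤ n →
    (((List.range m).map W).count i : ℤ)
      = (L.map (fun c : ℕ => F ((c:ℤ) - (if i = n then (n:ℤ) - 1 else (n:ℤ) + (i:ℤ) - 1)))).sum := by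
  intro L
  induction L using List.reverseRecOn with
  | nil =>
    intro _ _ m hm i _ _
    have : m = 0 := by simpa using hm
    subst this; simp
  | append_singleton L' c ih =>
    intro hmem hp m hmsum i hi1 hi2
    have hcn : n ≤ c := hmem c (by simp)
    have hmemL' : ∀ x ∈ L', n ≤ x := fun x hx => hmem x (by simp [hx])
    have hpL' : L'.Pairwise (fun a b => a + n ≤ b) :=
      hp.sublist (List.sublist_append_left L' [c])
    have hx : ∀ x ∈ L', x + n ≤ c := fun x hx =>
      (List.pairwise_append.mp hp).2.2 x hx c (by simp)
    have hFc : 1 ≤ F (c:ℤ) := Fpos' n hn F hF1 hFrec c (by exact_mod_cast Nat.one_le_iff_ne_zero.mpr (by omega))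
    have hsum0 : 0 ≤ (L'.map (fun c : ℕ => F (c:ℤ))).sum := by
      apply List.sum_nonneg
      intro x hxm
      simp only [List.mem_map] at hxm
      obtain ⟨y, hy, rfl⟩ := hxm
      have h1 : (1:ℤ) ≤ (y:ℤ) := by have := hmemL' y hy; omega
      have := Fpos' n hn F hF1 hFrec y h1
      omega
    have hmsum' : (m:ℤ) = (L'.map (fun c : ℕ => F (c:ℤ))).sum + F (c:ℤ) := by
      rw [hmsum, List.map_append, List.sum_append]; simp
    set fc : ℕ := (F (c:ℤ)).toNat with hfc
    have hfc' : (fc:ℤ) = F (c:ℤ) := Int.toNat_of_nonneg (by omega)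
    have hfcm : fc ≤ m := by omega
    set m' : ℕ := m - fc with hm'
    have hm'eq : (m':ℤ) = (L'.map (fun c : ℕ => F (c:ℤ))).sum := by
      have h2 : ((m - fc : ℕ) : ℤ) = (m:ℤ) - fc := by omega
      rw [hm', h2, hmsum', hfc']; ring
    have hbound : (m':ℤ) < F ((c:ℤ) - n + 1) := by
      rw [hm'eq]
      exact sum_lt' n hn F hF1 hFrec L' hmemL' hpL' ((c:ℤ) - n) (by omega)
        (fun x hxL => by have := hx x hxL; omega)
    have hmsplit : m = fc + m' := by omega
    have hlenc : (S c).length = fc := by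
      have := Slen' n hn F hF1 hFrec S hS1 hSrec c (by omega)
      omega
    have hblock : (List.range fc).map W = S c := by
      rw [← hlenc]
      exact (hW c hcn).symm
    have hseg : ∀ t, t < m' → W (fc + t) = W t := by
      intro t ht
      have hm'pos : 1 ≤ m' := by omega
      have hd2 : (n:ℤ) ≤ (c:ℤ) + 1 - n := by
        by_contra hcon
        push_neg at hcon
        have h1 : F ((c:ℤ) - n + 1) = 1 := hF1 _ (by omega) (by omega)
        omega
      set d : ℕ := c + 1 - n with hdd
      have hdn : n ≤ d := by omega
      have hdc : (d:ℤ) = (c:ℤ) + 1 - n := by omega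
      have hlend : ((S d).length : ℤ) = F (d:ℤ) :=
        Slen' n hn F hF1 hFrec S hS1 hSrec d (by omega)
      have hb2 : (m':ℤ) < F ((c:ℤ) + 1 - n) := by
        rw [show (c:ℤ) + 1 - n = (c:ℤ) - n + 1 by ring]
        exact hbound
      have htd : t < (S d).length := by
        rw [hdc] at hlend
        omega
      have hSc1 : S (c+1) = S c ++ S d := hSrec c hcn
      have h1 : (S (c+1))[fc + t]? = some (W (fc + t)) := by
        apply getW' n S W hW (c+1) (fc + t) (by omega)
        rw [hSc1, List.length_append, hlenc]
        omega
      have h2 : (S (c+1))[fc + t]? = some (W t) := by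
        rw [hSc1, List.getElem?_append_right (by rw [hlenc]; omega), hlenc]
        simpa using getW' n S W hW d t hdn htd
      rw [h1] at h2
      exact Option.some_inj.mp h2
    have ihe := ih hmemL' hpL' m' hm'eq i hi1 hi2
    rw [hmsplit, List.range_add, List.map_append, List.count_append]
    rw [hblock, List.map_map]
    have hsegmap : (List.range m').map (W ∘ fun x => fc + x) = (List.range m').map W := by
      apply List.map_congr_left
      intro t htm
      exact hseg t (List.mem_range.mp htm)
    rw [hsegmap]
    rw [List.map_append, List.sum_append]
    push_cast
    rw [ihe, Scount' n hn F hF1 hFrec S hS1 hSrec c (by omega) i hi1 hi2]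
    simp [add_comm]


lemma coe_list' (L : List ℕ) : (do let a ← L; pure ((a:ℤ)) : List ℤ) = L.map (fun a : ℕ => (a:ℤ)) := by
  induction L with
  | nil => rfl
  | cons x xs ih => simp_all [List.flatMap_cons]



/-- Let `n ≥ 3` and let `m ≥ 1` have `n`-decomposition `m = F c₁ + ⋯ + F c_k`
(encoded by the list `L`).  Here `F : ℤ → ℤ` is the generalized Fibonacci
sequence extended to all integer indices, `S` the `n`-string sequence and
`W = S_∞` the infinite `n`-string; `N_{a_i}(m) = ((List.range m).map W).count i`
is the number of occurrences of the letter `a_i` among the first `m` letters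
of `S_∞`.  Then for `1 ≤ i ≤ n-1`,
`N_{a_i}(m) = F (c₁-(n+i-1)) + ⋯ + F (c_k-(n+i-1))`, and
`N_{a_n}(m) = F (c₁-(n-1)) + ⋯ + F (c_k-(n-1))`. -/
theorem letter_counts_of_decomposition (n : ℕ) (hn : 3 ≤ n) (F : ℤ → ℤ)
    (hF1 : ∀ i : ℤ, 1 ≤ i → i ≤ (n : ℤ) → F i = 1)
    (hFrec : ∀ m : ℤ, F (m + 1) = F m + F (m + 1 - n))
    (S : ℕ → List ℕ)
    (hS1 : ∀ i, 1 ≤ i → i ≤ n → S i = [i])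
    (hSrec : ∀ m, n ≤ m → S (m + 1) = S m ++ S (m + 1 - n))
    (W : ℕ → ℕ)
    (hW : ∀ m, n ≤ m → S m = (List.range (S m).length).map W)
    (m : ℕ) (hm : 1 ≤ m) (L : List ℕ)
    (hLn : ∀ c ∈ L, n ≤ c)
    (hLgap : L.Chain' (fun a b => a + n ≤ b))
    (hLsum : (m : ℤ) = (L.map (fun c => F (c : ℤ))).sum) :
    (∀ i, 1 ≤ i → i ≤ n - 1 →
      (((List.range m).map W).count i : ℤ)
        = (L.map (fun c => F ((c : ℤ) - ((n : ℤ) + (i : ℤ) - 1)))).sum) ∧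
    ((((List.range m).map W).count n : ℤ)
        = (L.map (fun c => F ((c : ℤ) - ((n : ℤ) - 1)))).sum) := by
  haveI : IsTrans ℕ (fun a b : ℕ => a + n ≤ b) := ⟨fun a b c h1 h2 => by omega⟩
  have hpair : L.Pairwise (fun a b => a + n ≤ b) := List.isChain_iff_pairwise.mp hLgap
  have hLsum' : (m:ℤ) = (L.map (fun c : ℕ => F (c:ℤ))).sum := by
    rw [hLsum, coe_list', List.map_map]; rfl
  constructor
  · intro i hi1 hi2
    have hine : i ≠ n := by omega
    have := main_count' n hn F hF1 hFrec S hS1 hSrec W hW L hLn hpair m hLsum' i hi1 (by omega)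
    rw [if_neg hine] at this
    rw [coe_list', List.map_map]
    exact this
  · have := main_count' n hn F hF1 hFrec S hS1 hSrec W hW L hLn hpair m hLsum' n (by omega) le_rfl
    rw [if_pos rfl] at this
    rw [coe_list', List.map_map]
    exact this
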